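/- Let A be a commutative ring and V, W finitely generated projective A-modules. Then the second cross-effect of the co-Schur functor L̃^3_1 (defined by the short exact sequence 0 → L̃^3_1(V) → V ⊗ Λ^2(V) → Λ^3(V) → 0) satisfies cr_2(L̃^3_1)(V,W) ≅ (V ⊗ V ⊗ W) ⊕ (V ⊗ W ⊗ W). -/

import Mathlib

open TensorProduct
section AltLib
variable (R : Type*) [CommRing R]

/-- Relations defining the second exterior power. -/
def aq2 (M : Type*) [AddCommGroup M] [Module R M] : Submodule R (M ⊗[R] M) :=
  Submodule.span R {x | ∃ a : M, x = a ⊗ₜ[R] a}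

/-- The second exterior power. -/
abbrev AltSq (M : Type*) [AddCommGroup M] [Module R M] := (M ⊗[R] M) ⧸ aq2 R M

/-- Relations defining the third exterior power. -/
def aq3 (M : Type*) [AddCommGroup M] [Module R M] : Submodule R (M ⊗[R] (M ⊗[R] M)) :=
  Submodule.span R
    ({x | ∃ a c : M, x = a ⊗ₜ[R] (a ⊗ₜ[R] c)} ∪ {x | ∃ a b : M, x = a ⊗ₜ[R] (b ⊗ₜ[R] b)})

/-- The third exterior power. -/
abbrev AltCube (M : Type*) [AddCommGroup M] [Module R M] := (M ⊗[R] (M ⊗[R] M)) ⧸ aq3 R M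

variable {M : Type*} [AddCommGroup M] [Module R M]

/-- Wedging with `v` as a map `Λ² M → Λ³ M`. -/
noncomputable def wedgeAux (v : M) : AltSq R M →ₗ[R] AltCube R M :=
  Submodule.liftQ _ ((aq3 R M).mkQ ∘ₗ TensorProduct.mk R M (M ⊗[R] M) v) (by
    rw [aq2, Submodule.span_le]
    rintro x ⟨a, rfl⟩
    simp only [SetLike.mem_coe, LinearMap.mem_ker, LinearMap.comp_apply,
      TensorProduct.mk_apply, Submodule.mkQ_apply, Submodule.Quotient.mk_eq_zero]
    exact Submodule.subset_span (Or.inr ⟨v, a, rfl⟩))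

lemma wedgeAux_mk (v : M) (x : M ⊗[R] M) :
    wedgeAux R v (Submodule.Quotient.mk x) = Submodule.Quotient.mk (v ⊗ₜ[R] x) := rfl

/-- The wedge `M ⊗ Λ² M → Λ³ M` as a bilinear map. -/
noncomputable def wedgeBil : M →ₗ[R] AltSq R M →ₗ[R] AltCube R M where
  toFun := wedgeAux R
  map_add' v w := by
    refine LinearMap.ext fun x => ?_
    obtain ⟨y, rfl⟩ := Submodule.Quotient.mk_surjective _ x
    simp [wedgeAux_mk, add_tmul, Submodule.Quotient.mk_add]
  map_smul' r v := by
    refine LinearMap.ext fun x => ?_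
    obtain ⟨y, rfl⟩ := Submodule.Quotient.mk_surjective _ x
    simp only [wedgeAux_mk, RingHom.id_apply, LinearMap.smul_apply]
    rw [← Submodule.Quotient.mk_smul, smul_tmul']

/-- The wedge map `M ⊗ Λ² M → Λ³ M`. -/
noncomputable def wedgeMul : M ⊗[R] AltSq R M →ₗ[R] AltCube R M :=
  TensorProduct.lift (wedgeBil R)

/-- The co-Schur functor `L̃³₁`, the kernel of the wedge map `M ⊗ Λ² M → Λ³ M`. -/
noncomputable def coSchurL31 : Submodule R (M ⊗[R] AltSq R M) := LinearMap.ker (wedgeMul R)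

end AltLib

section AltFunctorial
variable {R : Type*} [CommRing R]
variable {M N : Type*} [AddCommGroup M] [Module R M] [AddCommGroup N] [Module R N]

/-- Functoriality of `Λ²`. -/
noncomputable def altSqMap (f : M →ₗ[R] N) : AltSq R M →ₗ[R] AltSq R N :=
  Submodule.mapQ _ _ (TensorProduct.map f f) (by
    rw [aq2, Submodule.span_le]
    rintro x ⟨a, rfl⟩
    simp only [SetLike.mem_coe, Submodule.mem_comap, TensorProduct.map_tmul]
    exact Submodule.subset_span ⟨f a, rfl⟩)

/-- The map induced on `M ⊗ Λ² M` by an endomorphism `p` of `M`;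
the co-Schur functor `L̃³₁` is a subfunctor of this construction. -/
noncomputable def ambMapAlt (p : M →ₗ[R] M) :
    M ⊗[R] AltSq R M →ₗ[R] M ⊗[R] AltSq R M :=
  TensorProduct.map p (altSqMap p)

end AltFunctorial

section Projections
variable (A V W : Type*) [CommRing A] [AddCommGroup V] [Module A V]
  [AddCommGroup W] [Module A W]

/-- First projection-inclusion endomorphism of `V ⊕ W`. -/
noncomputable def prj1 : V × W →ₗ[A] V × W := (LinearMap.inl A V W) ∘ₗ (LinearMap.fst A V W)

/-- Second projection-inclusion endomorphism of `V ⊕ W`. -/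
noncomputable def prj2 : V × W →ₗ[A] V × W := (LinearMap.inr A V W) ∘ₗ (LinearMap.snd A V W)

end Projections

/-- The second cross-effect of the co-Schur functor `L̃³₁`:
the image of `L̃³₁(V ⊕ W)` under the endomorphism `L̃³₁(p₁+p₂) - L̃³₁(p₁) - L̃³₁(p₂)`
(the Eilenberg–Mac Lane cross-effect). -/
noncomputable def cr2CoSchurL31 (A V W : Type*) [CommRing A] [AddCommGroup V] [Module A V]
    [AddCommGroup W] [Module A W] :
    Submodule A ((V × W) ⊗[A] AltSq A (V × W)) :=
  Submodule.map (ambMapAlt (prj1 A V W + prj2 A V W)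
      - ambMapAlt (prj1 A V W) - ambMapAlt (prj2 A V W))
    (coSchurL31 (R := A) (M := V × W))


section MyGeneral
variable {R : Type*} [CommRing R] {M N X : Type*} [AddCommGroup M] [Module R M]
  [AddCommGroup N] [Module R N] [AddCommGroup X] [Module R X]

lemma MyAltSq_ext {f g : AltSq R M →ₗ[R] X}
    (h : ∀ y z : M, f (Submodule.Quotient.mk (y ⊗ₜ[R] z)) = g (Submodule.Quotient.mk (y ⊗ₜ[R] z))) :
    f = g := by
  refine LinearMap.ext fun ω => ?_
  obtain ⟨t, rfl⟩ := Submodule.Quotient.mk_surjective _ ω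
  induction t using TensorProduct.induction_on with
  | zero => simp
  | tmul y z => exact h y z
  | add t t' ht ht' => rw [Submodule.Quotient.mk_add, map_add, map_add, ht, ht']

lemma MyMAltSq_ext {f g : M ⊗[R] AltSq R M →ₗ[R] X}
    (h : ∀ x y z : M, f (x ⊗ₜ[R] Submodule.Quotient.mk (y ⊗ₜ[R] z))
      = g (x ⊗ₜ[R] Submodule.Quotient.mk (y ⊗ₜ[R] z))) : f = g := by
  apply TensorProduct.ext'
  intro x ω
  obtain ⟨t, rfl⟩ := Submodule.Quotient.mk_surjective _ ω
  induction t using TensorProduct.induction_on with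
  | zero => simp
  | tmul y z => exact h x y z
  | add t t' ht ht' =>
      rw [Submodule.Quotient.mk_add, tmul_add, map_add, map_add, ht, ht']

lemma MyT3_ext {P Q : Type*} [AddCommGroup P] [Module R P] [AddCommGroup Q] [Module R Q]
    {f g : M ⊗[R] (P ⊗[R] Q) →ₗ[R] X}
    (h : ∀ a b c, f (a ⊗ₜ[R] (b ⊗ₜ[R] c)) = g (a ⊗ₜ[R] (b ⊗ₜ[R] c))) : f = g := by
  apply TensorProduct.ext'
  intro a t
  induction t using TensorProduct.induction_on with
  | zero => simp
  | tmul b c => exact h a b c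
  | add t t' ht ht' => rw [tmul_add, map_add, map_add, ht, ht']

lemma asq_diag (a : M) : (Submodule.Quotient.mk (a ⊗ₜ[R] a) : AltSq R M) = 0 :=
  (Submodule.Quotient.mk_eq_zero _).2 (Submodule.subset_span ⟨a, rfl⟩)

lemma asq_swap (a b : M) :
    (Submodule.Quotient.mk (b ⊗ₜ[R] a) : AltSq R M)
      = - Submodule.Quotient.mk (a ⊗ₜ[R] b) := by
  rw [eq_neg_iff_add_eq_zero, ← Submodule.Quotient.mk_add, Submodule.Quotient.mk_eq_zero]
  have h : b ⊗ₜ[R] a + a ⊗ₜ[R] b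
      = (a + b) ⊗ₜ[R] (a + b) - a ⊗ₜ[R] a - b ⊗ₜ[R] b := by
    simp only [add_tmul, tmul_add]; abel
  rw [h]
  exact Submodule.sub_mem _ (Submodule.sub_mem _ (Submodule.subset_span ⟨_, rfl⟩)
    (Submodule.subset_span ⟨_, rfl⟩)) (Submodule.subset_span ⟨_, rfl⟩)

lemma ac_rel1 (a c : M) : (Submodule.Quotient.mk (a ⊗ₜ[R] (a ⊗ₜ[R] c)) : AltCube R M) = 0 :=
  (Submodule.Quotient.mk_eq_zero _).2 (Submodule.subset_span (Or.inl ⟨a, c, rfl⟩))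

lemma ac_rel2 (a b : M) : (Submodule.Quotient.mk (a ⊗ₜ[R] (b ⊗ₜ[R] b)) : AltCube R M) = 0 :=
  (Submodule.Quotient.mk_eq_zero _).2 (Submodule.subset_span (Or.inr ⟨a, b, rfl⟩))

lemma ac_swap12 (a b c : M) :
    (Submodule.Quotient.mk (b ⊗ₜ[R] (a ⊗ₜ[R] c)) : AltCube R M)
      = - Submodule.Quotient.mk (a ⊗ₜ[R] (b ⊗ₜ[R] c)) := by
  rw [eq_neg_iff_add_eq_zero, ← Submodule.Quotient.mk_add, Submodule.Quotient.mk_eq_zero]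
  have h : b ⊗ₜ[R] (a ⊗ₜ[R] c) + a ⊗ₜ[R] (b ⊗ₜ[R] c)
      = (a + b) ⊗ₜ[R] ((a + b) ⊗ₜ[R] c) - a ⊗ₜ[R] (a ⊗ₜ[R] c) - b ⊗ₜ[R] (b ⊗ₜ[R] c) := by
    simp only [add_tmul, tmul_add]; abel
  rw [h]
  exact Submodule.sub_mem _ (Submodule.sub_mem _
      (Submodule.subset_span (Or.inl ⟨_, _, rfl⟩))
      (Submodule.subset_span (Or.inl ⟨_, _, rfl⟩)))
    (Submodule.subset_span (Or.inl ⟨_, _, rfl⟩))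

lemma ac_swap23 (a b c : M) :
    (Submodule.Quotient.mk (a ⊗ₜ[R] (c ⊗ₜ[R] b)) : AltCube R M)
      = - Submodule.Quotient.mk (a ⊗ₜ[R] (b ⊗ₜ[R] c)) := by
  rw [eq_neg_iff_add_eq_zero, ← Submodule.Quotient.mk_add, Submodule.Quotient.mk_eq_zero]
  have h : a ⊗ₜ[R] (c ⊗ₜ[R] b) + a ⊗ₜ[R] (b ⊗ₜ[R] c)
      = a ⊗ₜ[R] ((b + c) ⊗ₜ[R] (b + c)) - a ⊗ₜ[R] (b ⊗ₜ[R] b) - a ⊗ₜ[R] (c ⊗ₜ[R] c) := by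
    simp only [add_tmul, tmul_add]; abel
  rw [h]
  exact Submodule.sub_mem _ (Submodule.sub_mem _
      (Submodule.subset_span (Or.inr ⟨_, _, rfl⟩))
      (Submodule.subset_span (Or.inr ⟨_, _, rfl⟩)))
    (Submodule.subset_span (Or.inr ⟨_, _, rfl⟩))

lemma ac_cyc (a b c : M) :
    (Submodule.Quotient.mk (c ⊗ₜ[R] (a ⊗ₜ[R] b)) : AltCube R M)
      = Submodule.Quotient.mk (a ⊗ₜ[R] (b ⊗ₜ[R] c)) := by
  rw [ac_swap12 a c b, ac_swap23 a b c, neg_neg]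
end MyGeneral
section MyFunct
variable {R : Type*} [CommRing R] {M N P : Type*} [AddCommGroup M] [Module R M]
  [AddCommGroup N] [Module R N] [AddCommGroup P] [Module R P]

@[simp] lemma altSqMap_mk (f : M →ₗ[R] N) (y z : M) :
    altSqMap f (Submodule.Quotient.mk (y ⊗ₜ[R] z)) = Submodule.Quotient.mk (f y ⊗ₜ[R] f z) := by
  simp [altSqMap, Submodule.mapQ_apply]

@[simp] lemma wedgeMul_tmul (x : M) (t : M ⊗[R] M) :
    wedgeMul R (x ⊗ₜ[R] Submodule.Quotient.mk t) = Submodule.Quotient.mk (x ⊗ₜ[R] t) := rfl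

lemma altSqMap_comp (f : N →ₗ[R] P) (g : M →ₗ[R] N) :
    altSqMap (R := R) (f ∘ₗ g) = altSqMap f ∘ₗ altSqMap g :=
  MyAltSq_ext fun y z => by simp

lemma altSqMap_id : altSqMap (R := R) (LinearMap.id : M →ₗ[R] M) = LinearMap.id :=
  MyAltSq_ext fun y z => by simp

lemma ambMapAlt_comp (p q : M →ₗ[R] M) :
    ambMapAlt (R := R) (p ∘ₗ q) = ambMapAlt p ∘ₗ ambMapAlt q :=
  MyMAltSq_ext fun x y z => by simp [ambMapAlt]

lemma ambMapAlt_id : ambMapAlt (R := R) (LinearMap.id : M →ₗ[R] M) = LinearMap.id :=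
  MyMAltSq_ext fun x y z => by simp [ambMapAlt, altSqMap_id]

lemma ambMapAlt_zero : ambMapAlt (R := R) (0 : M →ₗ[R] M) = 0 :=
  MyMAltSq_ext fun x y z => by simp [ambMapAlt]

/-- Functoriality of `Λ³`. -/
noncomputable def altCubeMap (f : M →ₗ[R] N) : AltCube R M →ₗ[R] AltCube R N :=
  Submodule.mapQ _ _ (TensorProduct.map f (TensorProduct.map f f)) (by
    rw [aq3, Submodule.span_le]
    rintro x (⟨a, c, rfl⟩ | ⟨a, b, rfl⟩) <;>
      simp only [SetLike.mem_coe, Submodule.mem_comap, TensorProduct.map_tmul]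
    · exact Submodule.subset_span (Or.inl ⟨f a, f c, rfl⟩)
    · exact Submodule.subset_span (Or.inr ⟨f a, f b, rfl⟩))

@[simp] lemma altCubeMap_mk (f : M →ₗ[R] N) (x : M) (y : M) (z : M) :
    altCubeMap f (Submodule.Quotient.mk (x ⊗ₜ[R] (y ⊗ₜ[R] z)))
      = Submodule.Quotient.mk (f x ⊗ₜ[R] (f y ⊗ₜ[R] f z)) := by
  simp [altCubeMap, Submodule.mapQ_apply]

lemma wedge_natural (p : M →ₗ[R] M) :
    wedgeMul R ∘ₗ ambMapAlt p = altCubeMap p ∘ₗ wedgeMul R :=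
  MyMAltSq_ext fun x y z => by simp [ambMapAlt]

end MyFunct

section MySpec
variable (A V W : Type*) [CommRing A] [AddCommGroup V] [Module A V]
  [AddCommGroup W] [Module A W]

@[simp] lemma prj1_apply (x : V × W) : prj1 A V W x = (x.1, 0) := rfl
@[simp] lemma prj2_apply (x : V × W) : prj2 A V W x = (0, x.2) := rfl

lemma pair_zero : ((0, 0) : V × W) = 0 := rfl

@[simp] lemma mk_swap_inr_inl (v : V) (w : W) :
    (Submodule.Quotient.mk (((0, w) : V × W) ⊗ₜ[A] ((v, 0) : V × W)) : AltSq A (V × W))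
      = - Submodule.Quotient.mk (((v, 0) : V × W) ⊗ₜ[A] ((0, w) : V × W)) :=
  asq_swap _ _

/-- antisymmetrised projection `M ⊗ M → V ⊗ W`. -/
noncomputable def gRaw : (V × W) ⊗[A] (V × W) →ₗ[A] V ⊗[A] W :=
  TensorProduct.map (LinearMap.fst A V W) (LinearMap.snd A V W)
    - (TensorProduct.map (LinearMap.fst A V W) (LinearMap.snd A V W)) ∘ₗ
        (TensorProduct.comm A (V × W) (V × W)).toLinearMap

@[simp] lemma gRaw_tmul (y z : V × W) :
    gRaw A V W (y ⊗ₜ[A] z) = y.1 ⊗ₜ[A] z.2 - z.1 ⊗ₜ[A] y.2 := by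
  simp [gRaw]

noncomputable def gBar : AltSq A (V × W) →ₗ[A] V ⊗[A] W :=
  Submodule.liftQ _ (gRaw A V W) (by
    rw [aq2, Submodule.span_le]
    rintro x ⟨a, rfl⟩
    simp [LinearMap.mem_ker])

@[simp] lemma gBar_mk (y z : V × W) :
    gBar A V W (Submodule.Quotient.mk (y ⊗ₜ[A] z)) = y.1 ⊗ₜ[A] z.2 - z.1 ⊗ₜ[A] y.2 := by
  simp [gBar]

/-- extraction of the `V ⊗ V ⊗ W` cross-effect component. -/
noncomputable def piOne : (V × W) ⊗[A] AltSq A (V × W) →ₗ[A] V ⊗[A] (V ⊗[A] W) :=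
  TensorProduct.map (LinearMap.fst A V W) (gBar A V W)

/-- extraction of the `V ⊗ W ⊗ W` cross-effect component. -/
noncomputable def piTwo : (V × W) ⊗[A] AltSq A (V × W) →ₗ[A] V ⊗[A] (W ⊗[A] W) :=
  (TensorProduct.leftComm A W V W).toLinearMap ∘ₗ
    TensorProduct.map (LinearMap.snd A V W) (gBar A V W)

@[simp] lemma piOne_tmul (x y z : V × W) :
    piOne A V W (x ⊗ₜ[A] Submodule.Quotient.mk (y ⊗ₜ[A] z))
      = x.1 ⊗ₜ[A] (y.1 ⊗ₜ[A] z.2) - x.1 ⊗ₜ[A] (z.1 ⊗ₜ[A] y.2) := by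
  simp [piOne, tmul_sub]

@[simp] lemma piTwo_tmul (x y z : V × W) :
    piTwo A V W (x ⊗ₜ[A] Submodule.Quotient.mk (y ⊗ₜ[A] z))
      = y.1 ⊗ₜ[A] (x.2 ⊗ₜ[A] z.2) - z.1 ⊗ₜ[A] (x.2 ⊗ₜ[A] y.2) := by
  simp [piTwo, tmul_sub]

noncomputable def incVW : V ⊗[A] W →ₗ[A] AltSq A (V × W) :=
  (aq2 A (V × W)).mkQ ∘ₗ TensorProduct.map (LinearMap.inl A V W) (LinearMap.inr A V W)

noncomputable def incVV : V ⊗[A] V →ₗ[A] AltSq A (V × W) :=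
  (aq2 A (V × W)).mkQ ∘ₗ TensorProduct.map (LinearMap.inl A V W) (LinearMap.inl A V W)

noncomputable def incWW : W ⊗[A] W →ₗ[A] AltSq A (V × W) :=
  (aq2 A (V × W)).mkQ ∘ₗ TensorProduct.map (LinearMap.inr A V W) (LinearMap.inr A V W)

@[simp] lemma incVW_tmul (v : V) (w : W) :
    incVW A V W (v ⊗ₜ[A] w)
      = Submodule.Quotient.mk (((v, 0) : V × W) ⊗ₜ[A] ((0, w) : V × W)) := by
  simp [incVW]

@[simp] lemma incVV_tmul (v v' : V) :
    incVV A V W (v ⊗ₜ[A] v')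
      = Submodule.Quotient.mk (((v, 0) : V × W) ⊗ₜ[A] ((v', 0) : V × W)) := by
  simp [incVV]

@[simp] lemma incWW_tmul (w w' : W) :
    incWW A V W (w ⊗ₜ[A] w')
      = Submodule.Quotient.mk (((0, w) : V × W) ⊗ₜ[A] ((0, w') : V × W)) := by
  simp [incWW]

noncomputable def cyc3 : V ⊗[A] (V ⊗[A] W) →ₗ[A] W ⊗[A] (V ⊗[A] V) :=
  (TensorProduct.comm A (V ⊗[A] V) W).toLinearMap ∘ₗ
    (TensorProduct.assoc A V V W).symm.toLinearMap

@[simp] lemma cyc3_tmul (v v' : V) (w : W) :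
    cyc3 A V W (v ⊗ₜ[A] (v' ⊗ₜ[A] w)) = w ⊗ₜ[A] (v ⊗ₜ[A] v') := by
  simp [cyc3]

noncomputable def aMap : V ⊗[A] (V ⊗[A] W) →ₗ[A] (V × W) ⊗[A] AltSq A (V × W) :=
  TensorProduct.map (LinearMap.inl A V W) (incVW A V W)

noncomputable def bMap : V ⊗[A] (W ⊗[A] W) →ₗ[A] (V × W) ⊗[A] AltSq A (V × W) :=
  (TensorProduct.map (LinearMap.inr A V W) (incVW A V W)) ∘ₗ
    (TensorProduct.leftComm A V W W).toLinearMap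

@[simp] lemma aMap_tmul (v v' : V) (w : W) :
    aMap A V W (v ⊗ₜ[A] (v' ⊗ₜ[A] w))
      = ((v, 0) : V × W) ⊗ₜ[A]
          Submodule.Quotient.mk (((v', 0) : V × W) ⊗ₜ[A] ((0, w) : V × W)) := by
  simp [aMap]

@[simp] lemma bMap_tmul (v : V) (w w' : W) :
    bMap A V W (v ⊗ₜ[A] (w ⊗ₜ[A] w'))
      = ((0, w) : V × W) ⊗ₜ[A]
          Submodule.Quotient.mk (((v, 0) : V × W) ⊗ₜ[A] ((0, w') : V × W)) := by
  simp [bMap]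

/-- section over the `(2,1)`-component of the cross effect. -/
noncomputable def alphaMap : V ⊗[A] (V ⊗[A] W) →ₗ[A] (V × W) ⊗[A] AltSq A (V × W) :=
  aMap A V W - (TensorProduct.map (LinearMap.inr A V W) (incVV A V W)) ∘ₗ cyc3 A V W

/-- section over the `(1,2)`-component of the cross effect. -/
noncomputable def betaMap : V ⊗[A] (W ⊗[A] W) →ₗ[A] (V × W) ⊗[A] AltSq A (V × W) :=
  bMap A V W + TensorProduct.map (LinearMap.inl A V W) (incWW A V W)

@[simp] lemma alphaMap_tmul (v v' : V) (w : W) :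
    alphaMap A V W (v ⊗ₜ[A] (v' ⊗ₜ[A] w))
      = ((v, 0) : V × W) ⊗ₜ[A]
          Submodule.Quotient.mk (((v', 0) : V × W) ⊗ₜ[A] ((0, w) : V × W))
        - ((0, w) : V × W) ⊗ₜ[A]
          Submodule.Quotient.mk (((v, 0) : V × W) ⊗ₜ[A] ((v', 0) : V × W)) := by
  simp [alphaMap]

@[simp] lemma betaMap_tmul (v : V) (w w' : W) :
    betaMap A V W (v ⊗ₜ[A] (w ⊗ₜ[A] w'))
      = ((0, w) : V × W) ⊗ₜ[A]
          Submodule.Quotient.mk (((v, 0) : V × W) ⊗ₜ[A] ((0, w') : V × W))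
        + ((v, 0) : V × W) ⊗ₜ[A]
          Submodule.Quotient.mk (((0, w) : V × W) ⊗ₜ[A] ((0, w') : V × W)) := by
  simp [betaMap]

noncomputable def sigmaOne : (V × W) ⊗[A] AltSq A (V × W) →ₗ[A] V ⊗[A] AltSq A W :=
  TensorProduct.map (LinearMap.fst A V W) (altSqMap (LinearMap.snd A V W))

noncomputable def sigmaTwo : (V × W) ⊗[A] AltSq A (V × W) →ₗ[A] W ⊗[A] AltSq A V :=
  TensorProduct.map (LinearMap.snd A V W) (altSqMap (LinearMap.fst A V W))

noncomputable def iotaOne : V ⊗[A] AltSq A W →ₗ[A] (V × W) ⊗[A] AltSq A (V × W) :=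
  TensorProduct.map (LinearMap.inl A V W) (altSqMap (LinearMap.inr A V W))

noncomputable def iotaTwo : W ⊗[A] AltSq A V →ₗ[A] (V × W) ⊗[A] AltSq A (V × W) :=
  TensorProduct.map (LinearMap.inr A V W) (altSqMap (LinearMap.inl A V W))

@[simp] lemma sigmaOne_tmul (x y z : V × W) :
    sigmaOne A V W (x ⊗ₜ[A] Submodule.Quotient.mk (y ⊗ₜ[A] z))
      = x.1 ⊗ₜ[A] Submodule.Quotient.mk (y.2 ⊗ₜ[A] z.2) := by
  simp [sigmaOne]

@[simp] lemma sigmaTwo_tmul (x y z : V × W) :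
    sigmaTwo A V W (x ⊗ₜ[A] Submodule.Quotient.mk (y ⊗ₜ[A] z))
      = x.2 ⊗ₜ[A] Submodule.Quotient.mk (y.1 ⊗ₜ[A] z.1) := by
  simp [sigmaTwo]

@[simp] lemma iotaOne_tmul (v : V) (w w' : W) :
    iotaOne A V W (v ⊗ₜ[A] Submodule.Quotient.mk (w ⊗ₜ[A] w'))
      = ((v, 0) : V × W) ⊗ₜ[A]
          Submodule.Quotient.mk (((0, w) : V × W) ⊗ₜ[A] ((0, w') : V × W)) := by
  simp [iotaOne]

@[simp] lemma iotaTwo_tmul (w : W) (v v' : V) :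
    iotaTwo A V W (w ⊗ₜ[A] Submodule.Quotient.mk (v ⊗ₜ[A] v'))
      = ((0, w) : V × W) ⊗ₜ[A]
          Submodule.Quotient.mk (((v, 0) : V × W) ⊗ₜ[A] ((v', 0) : V × W)) := by
  simp [iotaTwo]

end MySpec

section MyMain
variable (A V W : Type*) [CommRing A] [AddCommGroup V] [Module A V]
  [AddCommGroup W] [Module A W]

lemma wedge_alpha : wedgeMul A ∘ₗ alphaMap A V W = 0 :=
  MyT3_ext fun v v' w => by
    simp only [LinearMap.comp_apply, alphaMap_tmul, map_sub, wedgeMul_tmul,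
      LinearMap.zero_apply]
    rw [ac_cyc ((v, 0) : V × W) ((v', 0) : V × W) ((0, w) : V × W)]
    simp

lemma wedge_beta : wedgeMul A ∘ₗ betaMap A V W = 0 :=
  MyT3_ext fun v w w' => by
    simp only [LinearMap.comp_apply, betaMap_tmul, map_add, wedgeMul_tmul,
      LinearMap.zero_apply]
    rw [ac_swap12]
    simp

lemma F1_alpha : ambMapAlt (prj1 A V W) ∘ₗ alphaMap A V W = 0 :=
  MyT3_ext fun v v' w => by
    simp [ambMapAlt, tmul_sub, sub_tmul, pair_zero]

lemma F2_alpha : ambMapAlt (prj2 A V W) ∘ₗ alphaMap A V W = 0 :=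
  MyT3_ext fun v v' w => by
    simp [ambMapAlt, tmul_sub, sub_tmul, pair_zero, asq_diag]

lemma F1_beta : ambMapAlt (prj1 A V W) ∘ₗ betaMap A V W = 0 :=
  MyT3_ext fun v w w' => by
    simp [ambMapAlt, tmul_add, add_tmul, pair_zero]

lemma F2_beta : ambMapAlt (prj2 A V W) ∘ₗ betaMap A V W = 0 :=
  MyT3_ext fun v w w' => by
    simp [ambMapAlt, tmul_add, add_tmul, pair_zero, asq_diag]

lemma piOne_alpha : piOne A V W ∘ₗ alphaMap A V W = LinearMap.id :=
  MyT3_ext fun v v' w => by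
    simp [pair_zero]

lemma piTwo_alpha : piTwo A V W ∘ₗ alphaMap A V W = 0 :=
  MyT3_ext fun v v' w => by
    simp [pair_zero]

lemma piOne_beta : piOne A V W ∘ₗ betaMap A V W = 0 :=
  MyT3_ext fun v w w' => by
    simp [pair_zero]

lemma piTwo_beta : piTwo A V W ∘ₗ betaMap A V W = LinearMap.id :=
  MyT3_ext fun v w w' => by
    simp [pair_zero]

end MyMain

section MyMain2
variable (A V W : Type*) [CommRing A] [AddCommGroup V] [Module A V]
  [AddCommGroup W] [Module A W]

/-- The key decomposition of the identity of `(V ⊕ W) ⊗ Λ²(V ⊕ W)`. -/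
lemma key_decomp :
    (LinearMap.id : (V × W) ⊗[A] AltSq A (V × W) →ₗ[A] (V × W) ⊗[A] AltSq A (V × W))
      = ambMapAlt (prj1 A V W) + ambMapAlt (prj2 A V W)
        + iotaOne A V W ∘ₗ sigmaOne A V W + iotaTwo A V W ∘ₗ sigmaTwo A V W
        + aMap A V W ∘ₗ piOne A V W + bMap A V W ∘ₗ piTwo A V W := by
  refine MyMAltSq_ext fun x y z => ?_
  obtain ⟨x1, x2⟩ := x
  obtain ⟨y1, y2⟩ := y
  obtain ⟨z1, z2⟩ := z
  have hx : ((x1, x2) : V × W) = (x1, 0) + (0, x2) := by simp [Prod.ext_iff]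
  have hy : ((y1, y2) : V × W) = (y1, 0) + (0, y2) := by simp [Prod.ext_iff]
  have hz : ((z1, z2) : V × W) = (z1, 0) + (0, z2) := by simp [Prod.ext_iff]
  simp only [LinearMap.add_apply, LinearMap.comp_apply, LinearMap.id_apply,
    ambMapAlt, TensorProduct.map_tmul, altSqMap_mk, prj1_apply, prj2_apply,
    sigmaOne_tmul, sigmaTwo_tmul, iotaOne_tmul, iotaTwo_tmul,
    piOne_tmul, piTwo_tmul, map_sub, aMap_tmul, bMap_tmul]
  rw [hx, hy, hz]
  simp only [add_tmul, tmul_add, Submodule.Quotient.mk_add, mk_swap_inr_inl,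
    tmul_neg, neg_neg]
  abel

noncomputable def rot3 :
    (V × W) ⊗[A] ((V × W) ⊗[A] (V × W)) →ₗ[A] (V × W) ⊗[A] ((V × W) ⊗[A] (V × W)) :=
  (TensorProduct.map LinearMap.id (TensorProduct.comm A (V × W) (V × W)).toLinearMap) ∘ₗ
    (TensorProduct.leftComm A (V × W) (V × W) (V × W)).toLinearMap

@[simp] lemma rot3_tmul (x y z : V × W) :
    rot3 A V W (x ⊗ₜ[A] (y ⊗ₜ[A] z)) = y ⊗ₜ[A] (z ⊗ₜ[A] x) := by
  simp [rot3]

noncomputable def tOne : (V × W) ⊗[A] ((V × W) ⊗[A] (V × W)) →ₗ[A] V ⊗[A] AltSq A W :=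
  TensorProduct.map (LinearMap.fst A V W)
    ((aq2 A W).mkQ ∘ₗ TensorProduct.map (LinearMap.snd A V W) (LinearMap.snd A V W))

noncomputable def tTwo : (V × W) ⊗[A] ((V × W) ⊗[A] (V × W)) →ₗ[A] W ⊗[A] AltSq A V :=
  TensorProduct.map (LinearMap.snd A V W)
    ((aq2 A V).mkQ ∘ₗ TensorProduct.map (LinearMap.fst A V W) (LinearMap.fst A V W))

noncomputable def muOneRaw : (V × W) ⊗[A] ((V × W) ⊗[A] (V × W)) →ₗ[A] V ⊗[A] AltSq A W :=
  tOne A V W + tOne A V W ∘ₗ rot3 A V W + tOne A V W ∘ₗ rot3 A V W ∘ₗ rot3 A V W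

noncomputable def muTwoRaw : (V × W) ⊗[A] ((V × W) ⊗[A] (V × W)) →ₗ[A] W ⊗[A] AltSq A V :=
  tTwo A V W + tTwo A V W ∘ₗ rot3 A V W + tTwo A V W ∘ₗ rot3 A V W ∘ₗ rot3 A V W

@[simp] lemma muOneRaw_tmul (x y z : V × W) :
    muOneRaw A V W (x ⊗ₜ[A] (y ⊗ₜ[A] z))
      = x.1 ⊗ₜ[A] Submodule.Quotient.mk (y.2 ⊗ₜ[A] z.2)
        + y.1 ⊗ₜ[A] Submodule.Quotient.mk (z.2 ⊗ₜ[A] x.2)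
        + z.1 ⊗ₜ[A] Submodule.Quotient.mk (x.2 ⊗ₜ[A] y.2) := by
  simp [muOneRaw, tOne]

@[simp] lemma muTwoRaw_tmul (x y z : V × W) :
    muTwoRaw A V W (x ⊗ₜ[A] (y ⊗ₜ[A] z))
      = x.2 ⊗ₜ[A] Submodule.Quotient.mk (y.1 ⊗ₜ[A] z.1)
        + y.2 ⊗ₜ[A] Submodule.Quotient.mk (z.1 ⊗ₜ[A] x.1)
        + z.2 ⊗ₜ[A] Submodule.Quotient.mk (x.1 ⊗ₜ[A] y.1) := by
  simp [muTwoRaw, tTwo]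

noncomputable def muOne : AltCube A (V × W) →ₗ[A] V ⊗[A] AltSq A W :=
  Submodule.liftQ _ (muOneRaw A V W) (by
    rw [aq3, Submodule.span_le]
    rintro x (⟨a, c, rfl⟩ | ⟨a, b, rfl⟩) <;>
      simp only [SetLike.mem_coe, LinearMap.mem_ker, muOneRaw_tmul]
    · rw [asq_swap a.2 c.2, asq_diag]
      simp [tmul_neg]
    · rw [asq_swap a.2 b.2, asq_diag]
      simp [tmul_neg])

noncomputable def muTwo : AltCube A (V × W) →ₗ[A] W ⊗[A] AltSq A V :=
  Submodule.liftQ _ (muTwoRaw A V W) (by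
    rw [aq3, Submodule.span_le]
    rintro x (⟨a, c, rfl⟩ | ⟨a, b, rfl⟩) <;>
      simp only [SetLike.mem_coe, LinearMap.mem_ker, muTwoRaw_tmul]
    · rw [asq_swap a.1 c.1, asq_diag]
      simp [tmul_neg]
    · rw [asq_swap a.1 b.1, asq_diag]
      simp [tmul_neg])

@[simp] lemma muOne_mk (x y z : V × W) :
    muOne A V W (Submodule.Quotient.mk (x ⊗ₜ[A] (y ⊗ₜ[A] z)))
      = muOneRaw A V W (x ⊗ₜ[A] (y ⊗ₜ[A] z)) := by
  simp [muOne, -muOneRaw_tmul]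

@[simp] lemma muTwo_mk (x y z : V × W) :
    muTwo A V W (Submodule.Quotient.mk (x ⊗ₜ[A] (y ⊗ₜ[A] z)))
      = muTwoRaw A V W (x ⊗ₜ[A] (y ⊗ₜ[A] z)) := by
  simp [muTwo, -muTwoRaw_tmul]

noncomputable def qW : V ⊗[A] (W ⊗[A] W) →ₗ[A] V ⊗[A] AltSq A W :=
  TensorProduct.map LinearMap.id (aq2 A W).mkQ

noncomputable def cMap : V ⊗[A] (V ⊗[A] W) →ₗ[A] W ⊗[A] AltSq A V :=
  (TensorProduct.map LinearMap.id (aq2 A V).mkQ) ∘ₗ cyc3 A V W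

lemma rel_one :
    muOne A V W ∘ₗ wedgeMul A
      = sigmaOne A V W - qW A V W ∘ₗ piTwo A V W := by
  refine MyMAltSq_ext fun x y z => ?_
  simp only [LinearMap.comp_apply, LinearMap.sub_apply, wedgeMul_tmul, muOne_mk,
    muOneRaw_tmul, sigmaOne_tmul, piTwo_tmul, map_sub, qW, TensorProduct.map_tmul,
    LinearMap.id_apply, Submodule.mkQ_apply]
  rw [asq_swap x.2 z.2]
  simp only [tmul_neg]
  abel

lemma rel_two :
    muTwo A V W ∘ₗ wedgeMul A
      = sigmaTwo A V W + cMap A V W ∘ₗ piOne A V W := by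
  refine MyMAltSq_ext fun x y z => ?_
  simp only [LinearMap.comp_apply, LinearMap.add_apply, wedgeMul_tmul, muTwo_mk,
    muTwoRaw_tmul, sigmaTwo_tmul, piOne_tmul, map_sub, cMap, cyc3_tmul,
    TensorProduct.map_tmul, LinearMap.id_apply, Submodule.mkQ_apply]
  rw [asq_swap x.1 z.1]
  simp only [tmul_neg]
  abel

end MyMain2

section MyFinal
variable (A V W : Type*) [CommRing A] [AddCommGroup V] [Module A V]
  [AddCommGroup W] [Module A W]

lemma hprj_sum : prj1 A V W + prj2 A V W = LinearMap.id := by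
  refine LinearMap.ext fun x => ?_
  simp [Prod.ext_iff]

lemma hprj11 : prj1 A V W ∘ₗ prj1 A V W = prj1 A V W := by
  refine LinearMap.ext fun x => ?_; simp
lemma hprj22 : prj2 A V W ∘ₗ prj2 A V W = prj2 A V W := by
  refine LinearMap.ext fun x => ?_; simp
lemma hprj12 : prj1 A V W ∘ₗ prj2 A V W = 0 := by
  refine LinearMap.ext fun x => ?_; simp [pair_zero]
lemma hprj21 : prj2 A V W ∘ₗ prj1 A V W = 0 := by
  refine LinearMap.ext fun x => ?_; simp [pair_zero]

lemma hT_eq : ambMapAlt (prj1 A V W + prj2 A V W)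
      - ambMapAlt (prj1 A V W) - ambMapAlt (prj2 A V W)
    = LinearMap.id - ambMapAlt (prj1 A V W) - ambMapAlt (prj2 A V W) := by
  rw [hprj_sum, ambMapAlt_id]

/-- The elements hit by the section maps lie in the cross effect. -/
lemma phi_mem (u : (V ⊗[A] (V ⊗[A] W)) × (V ⊗[A] (W ⊗[A] W))) :
    (LinearMap.coprod (alphaMap A V W) (betaMap A V W)) u ∈ cr2CoSchurL31 A V W := by
  have hwa := LinearMap.congr_fun (wedge_alpha A V W) u.1
  have hwb := LinearMap.congr_fun (wedge_beta A V W) u.2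
  have hf1a := LinearMap.congr_fun (F1_alpha A V W) u.1
  have hf1b := LinearMap.congr_fun (F1_beta A V W) u.2
  have hf2a := LinearMap.congr_fun (F2_alpha A V W) u.1
  have hf2b := LinearMap.congr_fun (F2_beta A V W) u.2
  simp only [LinearMap.comp_apply, LinearMap.zero_apply] at hwa hwb hf1a hf1b hf2a hf2b
  refine ⟨(LinearMap.coprod (alphaMap A V W) (betaMap A V W)) u, ?_, ?_⟩
  · simp only [SetLike.mem_coe, coSchurL31, LinearMap.mem_ker, LinearMap.coprod_apply,
      map_add, hwa, hwb, add_zero]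
  · rw [hT_eq]
    simp only [LinearMap.sub_apply, LinearMap.id_apply, LinearMap.coprod_apply, map_add,
      hf1a, hf1b, hf2a, hf2b, add_zero, sub_zero]

lemma phi_retract (x : (V × W) ⊗[A] AltSq A (V × W)) (hx : x ∈ cr2CoSchurL31 A V W) :
    (LinearMap.coprod (alphaMap A V W) (betaMap A V W)) (piOne A V W x, piTwo A V W x)
      = x := by
  obtain ⟨y, hy, rfl⟩ := hx
  rw [hT_eq]
  simp only [LinearMap.sub_apply, LinearMap.id_apply]
  set x' := y - ambMapAlt (prj1 A V W) y - ambMapAlt (prj2 A V W) y with hx'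
  have hwy : wedgeMul A y = 0 := hy
  -- F1 and F2 kill x'
  have hc11 := LinearMap.congr_fun
    ((ambMapAlt_comp (prj1 A V W) (prj1 A V W)).symm.trans
      (congrArg (ambMapAlt (R := A)) (hprj11 A V W))) y
  have hc22 := LinearMap.congr_fun
    ((ambMapAlt_comp (prj2 A V W) (prj2 A V W)).symm.trans
      (congrArg (ambMapAlt (R := A)) (hprj22 A V W))) y
  have hc12 := LinearMap.congr_fun
    ((ambMapAlt_comp (prj1 A V W) (prj2 A V W)).symm.trans
      ((congrArg (ambMapAlt (R := A)) (hprj12 A V W)).trans (ambMapAlt_zero))) y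
  have hc21 := LinearMap.congr_fun
    ((ambMapAlt_comp (prj2 A V W) (prj1 A V W)).symm.trans
      ((congrArg (ambMapAlt (R := A)) (hprj21 A V W)).trans (ambMapAlt_zero))) y
  simp only [LinearMap.comp_apply, LinearMap.zero_apply] at hc11 hc22 hc12 hc21
  have hF1x : ambMapAlt (prj1 A V W) x' = 0 := by
    simp only [hx', map_sub, hc11, hc12, sub_zero, sub_self]
  have hF2x : ambMapAlt (prj2 A V W) x' = 0 := by
    simp only [hx', map_sub, hc22, hc21, sub_zero]
    abel
  have hwnat1 := LinearMap.congr_fun (wedge_natural (prj1 A V W)) y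
  have hwnat2 := LinearMap.congr_fun (wedge_natural (prj2 A V W)) y
  simp only [LinearMap.comp_apply, hwy, map_zero] at hwnat1 hwnat2
  have hwx : wedgeMul A x' = 0 := by
    simp only [hx', map_sub, hwy, hwnat1, hwnat2, sub_zero]
  -- the residual element
  set r := x' - (LinearMap.coprod (alphaMap A V W) (betaMap A V W))
      (piOne A V W x', piTwo A V W x') with hr
  have hpa1 := LinearMap.congr_fun (piOne_alpha A V W) (piOne A V W x')
  have hpa2 := LinearMap.congr_fun (piTwo_alpha A V W) (piOne A V W x')
  have hpb1 := LinearMap.congr_fun (piOne_beta A V W) (piTwo A V W x')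
  have hpb2 := LinearMap.congr_fun (piTwo_beta A V W) (piTwo A V W x')
  simp only [LinearMap.comp_apply, LinearMap.zero_apply, LinearMap.id_apply]
    at hpa1 hpa2 hpb1 hpb2
  have hr1 : piOne A V W r = 0 := by
    simp only [hr, LinearMap.coprod_apply, map_sub, map_add, hpa1, hpb1, add_zero, sub_self]
  have hr2 : piTwo A V W r = 0 := by
    simp only [hr, LinearMap.coprod_apply, map_sub, map_add, hpa2, hpb2, zero_add, sub_self]
  have hf1a := LinearMap.congr_fun (F1_alpha A V W) (piOne A V W x')
  have hf1b := LinearMap.congr_fun (F1_beta A V W) (piTwo A V W x')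
  have hf2a := LinearMap.congr_fun (F2_alpha A V W) (piOne A V W x')
  have hf2b := LinearMap.congr_fun (F2_beta A V W) (piTwo A V W x')
  have hwa := LinearMap.congr_fun (wedge_alpha A V W) (piOne A V W x')
  have hwb := LinearMap.congr_fun (wedge_beta A V W) (piTwo A V W x')
  simp only [LinearMap.comp_apply, LinearMap.zero_apply] at hf1a hf1b hf2a hf2b hwa hwb
  have hrF1 : ambMapAlt (prj1 A V W) r = 0 := by
    simp only [hr, LinearMap.coprod_apply, map_sub, map_add, hF1x, hf1a, hf1b,
      add_zero, sub_self, sub_zero]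
  have hrF2 : ambMapAlt (prj2 A V W) r = 0 := by
    simp only [hr, LinearMap.coprod_apply, map_sub, map_add, hF2x, hf2a, hf2b,
      add_zero, sub_self, sub_zero]
  have hrw : wedgeMul A r = 0 := by
    simp only [hr, LinearMap.coprod_apply, map_sub, map_add, hwx, hwa, hwb,
      add_zero, sub_self, sub_zero]
  have hrel1 := LinearMap.congr_fun (rel_one A V W) r
  have hrel2 := LinearMap.congr_fun (rel_two A V W) r
  simp only [LinearMap.comp_apply, LinearMap.sub_apply, LinearMap.add_apply,
    hrw, hr1, hr2, map_zero] at hrel1 hrel2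
  -- hrel1 : 0 = sigmaOne r - 0 ; hrel2 : 0 = sigmaTwo r + 0
  have hs1 : sigmaOne A V W r = 0 := by
    rw [sub_zero] at hrel1; exact hrel1.symm
  have hs2 : sigmaTwo A V W r = 0 := by
    rw [add_zero] at hrel2; exact hrel2.symm
  have hkey := LinearMap.congr_fun (key_decomp A V W) r
  simp only [LinearMap.comp_apply, LinearMap.add_apply, LinearMap.id_apply,
    hrF1, hrF2, hs1, hs2, hr1, hr2, map_zero, add_zero, zero_add] at hkey
  -- hkey : r = 0
  have : (LinearMap.coprod (alphaMap A V W) (betaMap A V W))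
      (piOne A V W x', piTwo A V W x') = x' := by
    have := hkey
    rw [hr] at this
    linear_combination (norm := abel) -this
  exact this

end MyFinal

theorem cr2_coSchurL31_iso' (A V W : Type*) [CommRing A]
    [AddCommGroup V] [Module A V]
    [AddCommGroup W] [Module A W] :
    Nonempty ((cr2CoSchurL31 A V W) ≃ₗ[A]
      (V ⊗[A] (V ⊗[A] W)) × (V ⊗[A] (W ⊗[A] W))) := by
  refine ⟨LinearEquiv.ofLinear
    (LinearMap.prod (piOne A V W ∘ₗ (cr2CoSchurL31 A V W).subtype)
      (piTwo A V W ∘ₗ (cr2CoSchurL31 A V W).subtype))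
    ((LinearMap.coprod (alphaMap A V W) (betaMap A V W)).codRestrict _ (phi_mem A V W))
    ?_ ?_⟩
  · refine LinearMap.ext fun u => ?_
    have hpa1 := LinearMap.congr_fun (piOne_alpha A V W) u.1
    have hpa2 := LinearMap.congr_fun (piTwo_alpha A V W) u.1
    have hpb1 := LinearMap.congr_fun (piOne_beta A V W) u.2
    have hpb2 := LinearMap.congr_fun (piTwo_beta A V W) u.2
    simp only [LinearMap.comp_apply, LinearMap.zero_apply, LinearMap.id_apply]
      at hpa1 hpa2 hpb1 hpb2
    simp only [LinearMap.comp_apply, LinearMap.codRestrict_apply, LinearMap.prod_apply,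
      Function.prod, Submodule.subtype_apply, LinearMap.coprod_apply, map_add,
      hpa1, hpa2, hpb1, hpb2, add_zero, zero_add, LinearMap.id_apply]
  · refine LinearMap.ext fun x => ?_
    apply Subtype.ext
    simp only [LinearMap.comp_apply, LinearMap.codRestrict_apply, LinearMap.prod_apply,
      Pi.prod, Submodule.subtype_apply, LinearMap.id_apply]
    exact phi_retract A V W x.1 x.2


/-- for finitely generated projective modules `V`, `W` over a commutative
ring `A`, the second cross-effect of the co-Schur functor `L̃³₁` (where
`L̃³₁(V) = ker (V ⊗ Λ² V → Λ³ V)`) satisfies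
`cr₂(L̃³₁)(V, W) ≅ (V ⊗ V ⊗ W) ⊕ (V ⊗ W ⊗ W)`. -/
theorem cr2_coSchurL31_iso (A V W : Type*) [CommRing A]
    [AddCommGroup V] [Module A V] [Module.Finite A V] [Module.Projective A V]
    [AddCommGroup W] [Module A W] [Module.Finite A W] [Module.Projective A W] :
    Nonempty ((cr2CoSchurL31 A V W) ≃ₗ[A]
      (V ⊗[A] (V ⊗[A] W)) × (V ⊗[A] (W ⊗[A] W))) := by
  exact cr2_coSchurL31_iso' A V W
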